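/- Let N ≥ 2 be even. The set of tensors T ∈ ℂ² ⊗ (ℂ²)^{⊗4} for which the torus contraction φ(T) ∈ (ℂ²)^{⊗2N} (a copy of T placed at every vertex of the 2×N grid on the torus) has S-flattening of full rank 2^{N−1} — where S consists of the physical factors at the N + 1 vertices given by both vertices of column 1 together with the top-row vertices of columns 2,…,N — is open and dense (in the Euclidean topology) in ℂ² ⊗ (ℂ²)^{⊗4}. -/

import Mathlib

open scoped BigOperators

/-- The contraction map `ψ` of the `2 × N` grid on the torus.  Vertices are pairs
`(r, c) : Fin 2 × Fin N` (`r` the row, `c` the column); each vertex `v` carries a tensor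
`T v ∈ ℂ² ⊗ (ℂ²)^{⊗4}` given in coordinates as `T v b u x d l` where `b` is the physical index
and `u, x, d, l` are the indices of the upper, right, lower and left edges at `v`.
For each column `c` there are two vertical entanglement edges joining `(0,c)` and `(1,c)`:
edge `U c` is the upper edge of `(0,c)` and the lower edge of `(1,c)`, and edge `D c` is the
lower edge of `(0,c)` and the upper edge of `(1,c)`.  For each vertex `(r,c)` the horizontal
entanglement edge `H (r,c)` is the right edge of `(r,c)` and the left edge of `(r, c+1 mod N)`.
The coordinate of `psi N hN T` at a physical multi-index `b` is the sum over all assignments of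
an index in `{1,2}` to every entanglement edge of the product over the vertices of the
corresponding coordinates of the `T v`. -/
noncomputable def psi (N : ℕ) (hN : 2 ≤ N)
    (T : Fin 2 × Fin N → (Fin 2 → Fin 2 → Fin 2 → Fin 2 → Fin 2 → ℂ)) :
    (Fin 2 × Fin N → Fin 2) → ℂ := fun b =>
  ∑ U : Fin N → Fin 2, ∑ D : Fin N → Fin 2, ∑ H : Fin 2 × Fin N → Fin 2,
    ∏ v : Fin 2 × Fin N,
      T v (b v) (if v.1 = 0 then U v.2 else D v.2) (H v)
        (if v.1 = 0 then D v.2 else U v.2) (H (v.1, v.2 - ⟨1, by omega⟩))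

/-- The torus contraction `φ(T)` obtained by placing the single tensor `T ∈ ℂ² ⊗ (ℂ²)^{⊗4}` at
every vertex of the `2 × N` grid on the torus. -/
noncomputable def phi (N : ℕ) (hN : 2 ≤ N)
    (T : Fin 2 → Fin 2 → Fin 2 → Fin 2 → Fin 2 → ℂ) : (Fin 2 × Fin N → Fin 2) → ℂ :=
  psi N hN (fun _ => T)

/-- The `S`-flattening of a tensor `t ∈ (ℂ²)^{⊗2N}` (tensor factors indexed by the vertices of
the `2 × N` torus grid, `t` written in coordinates in the standard basis), as a matrix whose
columns are indexed by the multi-indices of the factors in `S` and whose rows are indexed by the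
multi-indices of the remaining factors; thus `(flat N S t).mulVecLin` is exactly the flattening
map `(⊗_{v∈S} ℂ²)^* → ⊗_{v∉S} ℂ²` in coordinates, and its rank is `(flat N S t).rank`. -/
noncomputable def flat (N : ℕ) (S : Finset (Fin 2 × Fin N))
    (t : (Fin 2 × Fin N → Fin 2) → ℂ) :
    Matrix ({v : Fin 2 × Fin N // v ∉ S} → Fin 2) ({v : Fin 2 × Fin N // v ∈ S} → Fin 2) ℂ :=
  Matrix.of fun b a => t fun v => if h : v ∈ S then a ⟨v, h⟩ else b ⟨v, h⟩

/-- `cpRankLE t r` says the tensor `t ∈ (ℂ²)^{⊗2N}` (factors indexed by the torus grid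
vertices, coordinates in the standard basis) is a sum of `r` rank-one (pure) tensors. -/
def cpRankLE {N : ℕ} (t : (Fin 2 × Fin N → Fin 2) → ℂ) (r : ℕ) : Prop :=
  ∃ w : Fin r → (Fin 2 × Fin N) → Fin 2 → ℂ,
    t = fun x => ∑ j : Fin r, ∏ v : Fin 2 × Fin N, w j v (x v)

set_option synthInstance.maxSize 4000

open scoped Matrix

open scoped ComplexOrder

namespace Stmt8Aux

abbrev TenSp := Fin 2 → Fin 2 → Fin 2 → Fin 2 → Fin 2 → ℂ

variable (N : ℕ) (hN : 2 ≤ N)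

lemma zeroLtN (h2 : 2 ≤ N) : 0 < N := by omega

def Sset : Finset (Fin 2 × Fin N) :=
  Finset.univ.filter fun v => v.1 = 0 ∨ v.2 = ⟨0, zeroLtN N hN⟩

lemma mem_Sset (v : Fin 2 × Fin N) : v ∈ Sset N hN ↔ v.1 = 0 ∨ v.2 = ⟨0, zeroLtN N hN⟩ := by
  simp [Sset]

lemma not_mem_Sset (v : Fin 2 × Fin N) :
    v ∉ Sset N hN ↔ v.1 = 1 ∧ v.2 ≠ ⟨0, zeroLtN N hN⟩ := by
  rw [mem_Sset, not_or]
  constructor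
  · rintro ⟨h1, h2⟩
    refine ⟨?_, h2⟩
    have := v.1.isLt
    rw [Fin.ext_iff] at h1 ⊢
    omega
  · rintro ⟨h1, h2⟩
    refine ⟨?_, h2⟩
    rw [h1]; decide

lemma mem_Sset_left (c : Fin N) : ((0 : Fin 2), c) ∈ Sset N hN := by
  rw [mem_Sset]; left; rfl

lemma mem_Sset_one (c : Fin N) : ((1 : Fin 2), c) ∈ Sset N hN ↔ c = ⟨0, zeroLtN N hN⟩ := by
  rw [mem_Sset]
  simp

abbrev RT := {v : Fin 2 × Fin N // v ∉ Sset N hN} → Fin 2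
abbrev CT := {v : Fin 2 × Fin N // v ∈ Sset N hN} → Fin 2

def colOf (r : RT N hN) : CT N hN := fun s =>
  if h : ((1 : Fin 2), s.1.2) ∉ Sset N hN then r ⟨((1 : Fin 2), s.1.2), h⟩ else 0

noncomputable def Msub (T : TenSp) : Matrix (RT N hN) (RT N hN) ℂ :=
  Matrix.of fun b r => flat N (Sset N hN) (phi N hN T) b (colOf N hN r)

lemma card_notS : Fintype.card {v : Fin 2 × Fin N // v ∉ Sset N hN} = N - 1 := by
  have e : {v : Fin 2 × Fin N // v ∉ Sset N hN} ≃ {c : Fin N // c ≠ ⟨0, zeroLtN N hN⟩} :=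
    { toFun := fun v => ⟨v.1.2, ((not_mem_Sset N hN v.1).1 v.2).2⟩
      invFun := fun c => ⟨((1 : Fin 2), c.1), (not_mem_Sset N hN _).2 ⟨rfl, c.2⟩⟩
      left_inv := fun v => Subtype.ext
        (Prod.ext (((not_mem_Sset N hN v.1).1 v.2).1).symm rfl)
      right_inv := fun c => rfl }
  rw [Fintype.card_congr e, Fintype.card_subtype_compl, Fintype.card_subtype_eq,
    Fintype.card_fin]

lemma card_RT : Fintype.card (RT N hN) = 2 ^ (N - 1) := by
  rw [Fintype.card_fun, card_notS, Fintype.card_fin]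

noncomputable def W : TenSp := fun b u x d l =>
  if b = u ∧ u = d ∧ x = 0 ∧ l = 0 then 1 else 0

lemma phi_W (N : ℕ) (hN : 2 ≤ N) (b : Fin 2 × Fin N → Fin 2) :
    phi N hN W b = ∏ c : Fin N, (if b (1, c) = b (0, c) then (1 : ℂ) else 0) := by
  classical
  unfold phi psi
  rw [Finset.sum_eq_single (fun c => b (0, c))]
  · rw [Finset.sum_eq_single (fun c => b (0, c))]
    · rw [Finset.sum_eq_single (fun _ => (0 : Fin 2))]
      · rw [Fintype.prod_prod_type, Fin.prod_univ_two]
        simp only [ite_self]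
        have hrow0 : (∏ c : Fin N, W (b (0, c)) (b (0, c)) 0 (b (0, c)) 0) = 1 :=
          Finset.prod_eq_one fun c _ => by simp [W]
        rw [hrow0, one_mul]
        exact Finset.prod_congr rfl fun c _ => by simp [W]
      · intro H _ hH
        obtain ⟨v, hv⟩ := Function.ne_iff.1 hH
        apply Finset.prod_eq_zero (Finset.mem_univ v)
        simp only [W]
        rw [if_neg]
        rintro ⟨-, -, h3, -⟩
        exact hv h3
      · intro h; exact absurd (Finset.mem_univ _) h
    · intro D _ hD
      obtain ⟨c, hc⟩ := Function.ne_iff.1 hD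
      apply Finset.sum_eq_zero
      intro H _
      apply Finset.prod_eq_zero (Finset.mem_univ ((0 : Fin 2), c))
      simp only [W]
      rw [if_neg]
      rintro ⟨-, h2, -, -⟩
      simp only [if_true] at h2
      exact hc h2.symm
    · intro h; exact absurd (Finset.mem_univ _) h
  · intro U _ hU
    obtain ⟨c, hc⟩ := Function.ne_iff.1 hU
    apply Finset.sum_eq_zero
    intro D _
    apply Finset.sum_eq_zero
    intro H _
    apply Finset.prod_eq_zero (Finset.mem_univ ((0 : Fin 2), c))
    simp only [W]
    rw [if_neg]
    rintro ⟨h1, -, -, -⟩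
    simp only [if_true] at h1
    exact hc h1.symm
  · intro h; exact absurd (Finset.mem_univ _) h


lemma Msub_W : Msub N hN W = 1 := by
  classical
  ext b r
  show phi N hN W (fun v => if h : v ∈ Sset N hN then colOf N hN r ⟨v, h⟩ else b ⟨v, h⟩)
      = (1 : Matrix (RT N hN) (RT N hN) ℂ) b r
  rw [phi_W, Matrix.one_apply]
  by_cases hbr : b = r
  · subst hbr
    rw [if_pos rfl]
    apply Finset.prod_eq_one
    intro c _
    rw [if_pos]
    by_cases hc : ((1 : Fin 2), c) ∈ Sset N hN
    · rw [dif_pos hc, dif_pos (mem_Sset_left N hN c)]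
      simp only [colOf]
    · rw [dif_neg hc, dif_pos (mem_Sset_left N hN c)]
      simp only [colOf]
      rw [dif_pos hc]
  · rw [if_neg hbr]
    obtain ⟨v', hv'⟩ := Function.ne_iff.1 hbr
    obtain ⟨h1, h2⟩ := (not_mem_Sset N hN v'.1).1 v'.2
    have hcv : ((1 : Fin 2), v'.1.2) = v'.1 := Prod.ext h1.symm rfl
    have hmem : ((1 : Fin 2), v'.1.2) ∉ Sset N hN := by rw [hcv]; exact v'.2
    apply Finset.prod_eq_zero (Finset.mem_univ v'.1.2)
    rw [if_neg]
    rw [dif_neg hmem, dif_pos (mem_Sset_left N hN v'.1.2)]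
    show ¬ (b ⟨(1, v'.1.2), hmem⟩ = colOf N hN r ⟨(0, v'.1.2), _⟩)
    unfold colOf
    rw [dif_pos hmem]
    have hsub : (⟨((1 : Fin 2), v'.1.2), hmem⟩ : {v : Fin 2 × Fin N // v ∉ Sset N hN}) = v' :=
      Subtype.ext hcv
    rw [hsub]
    exact hv'

lemma rank_eq_of_det {T : TenSp} (h : (Msub N hN T).det ≠ 0) :
    (flat N (Sset N hN) (phi N hN T)).rank = 2 ^ (N - 1) := by
  classical
  set A := flat N (Sset N hN) (phi N hN T) with hA
  apply le_antisymm
  · exact (Matrix.rank_le_card_height A).trans (le_of_eq (card_RT N hN))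
  · have hE : Msub N hN T
        = A * (Matrix.of fun c r => if c = colOf N hN r then (1 : ℂ) else 0) := by
      ext b r
      simp [Msub, Matrix.mul_apply]
      rfl
    have hrank : (Msub N hN T).rank = Fintype.card (RT N hN) :=
      Matrix.rank_of_isUnit _ ((Matrix.isUnit_iff_isUnit_det _).2 (isUnit_iff_ne_zero.2 h))
    rw [← card_RT N hN, ← hrank, hE]
    exact Matrix.rank_mul_le_left _ _

lemma rank_eq_iff_gram (T : TenSp) :
    (flat N (Sset N hN) (phi N hN T)).rank = 2 ^ (N - 1) ↔
      ((flat N (Sset N hN) (phi N hN T)) * (flat N (Sset N hN) (phi N hN T))ᴴ).det ≠ 0 := by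
  classical
  set A := flat N (Sset N hN) (phi N hN T) with hA
  constructor
  · intro hr
    have hrank : (A * Aᴴ).rank = 2 ^ (N - 1) := by
      rw [Matrix.rank_self_mul_conjTranspose, hr]
    have htop : LinearMap.range (A * Aᴴ).mulVecLin = ⊤ := by
      apply Submodule.eq_top_of_finrank_eq
      rw [show Module.finrank ℂ ↥(LinearMap.range (A * Aᴴ).mulVecLin) = (A * Aᴴ).rank from rfl,
        hrank, Module.finrank_fintype_fun_eq_card, card_RT N hN]
    have hsurj : Function.Surjective (A * Aᴴ).mulVec := fun y => by
      obtain ⟨x, hx⟩ := LinearMap.range_eq_top.1 htop y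
      exact ⟨x, hx⟩
    exact ((Matrix.isUnit_iff_isUnit_det _).1
      (Matrix.mulVec_surjective_iff_isUnit.1 hsurj)).ne_zero
  · intro hd
    have : (A * Aᴴ).rank = Fintype.card (RT N hN) :=
      Matrix.rank_of_isUnit _ ((Matrix.isUnit_iff_isUnit_det _).2 (isUnit_iff_ne_zero.2 hd))
    rw [← Matrix.rank_self_mul_conjTranspose, this, card_RT N hN]

lemma continuous_A : Continuous fun T : TenSp => flat N (Sset N hN) (phi N hN T) := by
  apply continuous_matrix
  intro b a
  show Continuous fun T : TenSp => phi N hN T _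
  unfold phi psi
  apply continuous_finset_sum; intro U _
  apply continuous_finset_sum; intro D _
  apply continuous_finset_sum; intro H _
  apply continuous_finset_prod; intro v _
  exact (continuous_apply _).comp ((continuous_apply _).comp ((continuous_apply _).comp
    ((continuous_apply _).comp (continuous_apply _))))

lemma isOpen_fullRank :
    IsOpen {T : TenSp | (flat N (Sset N hN) (phi N hN T)).rank = 2 ^ (N - 1)} := by
  classical
  have heq : {T : TenSp | (flat N (Sset N hN) (phi N hN T)).rank = 2 ^ (N - 1)} =
      (fun T : TenSp => ((flat N (Sset N hN) (phi N hN T)) *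
        (flat N (Sset N hN) (phi N hN T))ᴴ).det) ⁻¹' {(0 : ℂ)}ᶜ := by
    ext T
    simp only [Set.mem_setOf_eq, Set.mem_preimage, Set.mem_compl_iff, Set.mem_singleton_iff]
    exact rank_eq_iff_gram N hN T
  rw [heq]
  exact (isOpen_compl_singleton).preimage
    (((continuous_A N hN).matrix_mul ((continuous_A N hN).matrix_conjTranspose)).matrix_det)

lemma exists_poly (T D0 : TenSp) :
    ∃ p : Polynomial ℂ, ∀ z : ℂ, p.eval z = (Msub N hN (T + z • D0)).det := by
  classical
  refine ⟨(Matrix.of fun (b r : RT N hN) =>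
    ∑ U : Fin N → Fin 2, ∑ D : Fin N → Fin 2, ∑ H : Fin 2 × Fin N → Fin 2,
      ∏ v : Fin 2 × Fin N,
        (Polynomial.C (T ((if h : v ∈ Sset N hN then colOf N hN r ⟨v, h⟩ else b ⟨v, h⟩))
            (if v.1 = 0 then U v.2 else D v.2) (H v)
            (if v.1 = 0 then D v.2 else U v.2) (H (v.1, v.2 - (⟨1, Nat.lt_of_lt_of_le one_lt_two hN⟩ : Fin N))))
          + Polynomial.X * Polynomial.C (D0
            ((if h : v ∈ Sset N hN then colOf N hN r ⟨v, h⟩ else b ⟨v, h⟩))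
            (if v.1 = 0 then U v.2 else D v.2) (H v)
            (if v.1 = 0 then D v.2 else U v.2)
            (H (v.1, v.2 - (⟨1, Nat.lt_of_lt_of_le one_lt_two hN⟩ : Fin N)))))).det, ?_⟩
  intro z
  rw [← Polynomial.coe_evalRingHom, RingHom.map_det]
  show Matrix.det _ = Matrix.det _
  congr 1
  ext b r
  show Polynomial.eval z _ = Msub N hN (T + z • D0) b r
  simp only [Matrix.of_apply]
  rw [Polynomial.eval_finset_sum]
  show _ = psi N hN (fun _ => T + z • D0)
      (fun v => if h : v ∈ Sset N hN then colOf N hN r ⟨v, h⟩ else b ⟨v, h⟩)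
  unfold psi
  refine Finset.sum_congr rfl fun U _ => ?_
  rw [Polynomial.eval_finset_sum]
  refine Finset.sum_congr rfl fun D _ => ?_
  rw [Polynomial.eval_finset_sum]
  refine Finset.sum_congr rfl fun H _ => ?_
  rw [Polynomial.eval_prod]
  refine Finset.prod_congr rfl fun v _ => ?_
  simp only [Pi.add_apply, Pi.smul_apply, smul_eq_mul, Polynomial.eval_add,
    Polynomial.eval_mul, Polynomial.eval_C, Polynomial.eval_X]

lemma dense_fullRank :
    Dense {T : TenSp | (flat N (Sset N hN) (phi N hN T)).rank = 2 ^ (N - 1)} := by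
  classical
  intro T
  rw [Metric.mem_closure_iff]
  intro ε hε
  obtain ⟨p, hp⟩ := exists_poly N hN T (W - T)
  have hW : T + (1 : ℂ) • (W - T) = W := by simp
  have hp1 : p.eval 1 ≠ 0 := by
    rw [hp, hW, Msub_W N hN]
    simp
  have hpne : p ≠ 0 := by rintro rfl; exact hp1 (by simp)
  have hroots := Polynomial.finite_setOf_isRoot hpne
  have hg : Continuous fun z : ℂ => T + z • (W - T) :=
    continuous_const.add (continuous_id.smul continuous_const)
  obtain ⟨δ, hδ0, hδ⟩ := Metric.continuous_iff.1 hg 0 ε hε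
  have hinj : Function.Injective fun n : ℕ => ((δ / (n + 2) : ℝ) : ℂ) := by
    intro n m h
    have h' : δ / ((n : ℝ) + 2) = δ / ((m : ℝ) + 2) := by
      have := Complex.ofReal_inj.1 h
      push_cast at this
      exact this
    rw [div_eq_div_iff (by positivity) (by positivity)] at h'
    have h2 : ((m : ℝ) + 2) = (n : ℝ) + 2 := mul_left_cancel₀ (ne_of_gt hδ0) h'
    have h3 : (m : ℝ) = n := by linarith
    exact_mod_cast h3.symm
  have hmem : ∀ n : ℕ, ((δ / (n + 2) : ℝ) : ℂ) ∈ Metric.ball (0 : ℂ) δ := by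
    intro n
    rw [Metric.mem_ball, dist_zero_right, Complex.norm_real, Real.norm_eq_abs,
      abs_of_pos (by positivity)]
    exact div_lt_self hδ0 (by have := Nat.cast_nonneg (α := ℝ) n; linarith)
  have hBinf : (Metric.ball (0 : ℂ) δ).Infinite :=
    Set.infinite_of_injective_forall_mem hinj hmem
  obtain ⟨z, hzB, hznr⟩ := (hBinf.diff hroots).nonempty
  refine ⟨T + z • (W - T), ?_, ?_⟩
  · refine rank_eq_of_det N hN ?_
    rw [← hp z]
    exact fun h => hznr h
  · have hz : dist z 0 < δ := Metric.mem_ball.1 hzB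
    have := hδ z hz
    rw [show T + (0 : ℂ) • (W - T) = T by simp] at this
    rw [dist_comm]
    exact this

end Stmt8Aux


/-- The set of tensors `T ∈ ℂ² ⊗ (ℂ²)^{⊗4}` for which the torus contraction
`φ(T) ∈ (ℂ²)^{⊗2N}` has `S`-flattening of full rank `2^{N-1}` — where `S` consists of the
physical factors at the `N + 1` vertices given by both vertices of column `1` (column index `0`)
together with the top-row vertices of the other columns — is open and dense (Euclidean
topology) in `ℂ² ⊗ (ℂ²)^{⊗4}`. -/
theorem stmt8 (N : ℕ) (hN : 2 ≤ N) (hNeven : Even N) :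
    IsOpen {T : Fin 2 → Fin 2 → Fin 2 → Fin 2 → Fin 2 → ℂ |
        (flat N (Finset.univ.filter fun v => v.1 = 0 ∨ v.2 = ⟨0, by omega⟩)
          (phi N hN T)).rank = 2 ^ (N - 1)} ∧
      Dense {T : Fin 2 → Fin 2 → Fin 2 → Fin 2 → Fin 2 → ℂ |
        (flat N (Finset.univ.filter fun v => v.1 = 0 ∨ v.2 = ⟨0, by omega⟩)
          (phi N hN T)).rank = 2 ^ (N - 1)} := by
  exact ⟨Stmt8Aux.isOpen_fullRank N hN, Stmt8Aux.dense_fullRank N hN⟩
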